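/- Let W = ⟨S|M⟩ be a finite rank Coxeter system and let u, w ∈ S. Then γ_{u,w}^{ψ_S}(z) ≠ 0 if and only if z ∈ {v, uv, vw, uvw} for some v ∈ W satisfying |v| ≤ |uv|, |v| ≤ |vw| and uv = vw. -/

import Mathlib

/-- The function `γ_{u,w}^ψ(v) = ψ(uvw) + ψ(v) − ψ(uv) − ψ(vw)`. -/
def gammaFun {W : Type*} [Group W] (ψ : W → ℝ) (u w v : W) : ℝ :=
  ψ (u * v * w) + ψ v - ψ (u * v) - ψ (v * w)

open CoxeterSystem List

attribute [local instance] Classical.propDecidable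

namespace GammaAux

variable {B : Type*} {M : CoxeterMatrix B} {W : Type*} [Group W]

/-- `mu l x = (-1)^(number of occurrences of x in l)`. -/
noncomputable def mu (l : List W) (x : W) : ℤˣ :=
  (l.map (fun r => if r = x then (-1 : ℤˣ) else 1)).prod

@[simp] lemma mu_nil (x : W) : mu ([] : List W) x = 1 := rfl

lemma mu_cons (r : W) (l : List W) (x : W) :
    mu (r :: l) x = (if r = x then (-1 : ℤˣ) else 1) * mu l x := by
  simp [mu]

lemma mu_append (l₁ l₂ : List W) (x : W) :
    mu (l₁ ++ l₂) x = mu l₁ x * mu l₂ x := by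
  simp [mu]

lemma mu_singleton (r x : W) : mu [r] x = if r = x then (-1 : ℤˣ) else 1 := by
  simp [mu]

lemma mu_eq_one_of_not_mem {l : List W} {x : W} (h : x ∉ l) : mu l x = 1 := by
  induction l with
  | nil => rfl
  | cons r l ih =>
    rw [mu_cons, if_neg (by rintro rfl; exact h mem_cons_self),
      ih (fun hm => h (mem_cons_of_mem r hm)), one_mul]

lemma mu_map_of_iff {l : List W} {g : W → W} {x : W} (hg : ∀ r, g r = x ↔ r = x) :
    mu (l.map g) x = mu l x := by
  induction l with
  | nil => rfl
  | cons r l ih =>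
    rw [map_cons, mu_cons, mu_cons, ih]
    congr 1
    by_cases hr : r = x
    · rw [if_pos hr, if_pos ((hg r).mpr hr)]
    · rw [if_neg hr, if_neg (fun h => hr ((hg r).mp h))]

lemma mu_congr {l₁ l₂ : List W} (h : l₁ = l₂) (x : W) : mu l₁ x = mu l₂ x := by rw [h]

variable (cs : CoxeterSystem M W)

local prefix:100 "s" => cs.simple
local prefix:100 "π" => cs.wordProd
local prefix:100 "ℓ" => cs.length
local prefix:100 "ris" => cs.rightInvSeq

/-- The sign-flip permutation associated to a simple reflection. -/
noncomputable def sp (i : B) : Equiv.Perm (W × ℤˣ) :=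
  Function.Involutive.toPerm
    (fun p => (s i * p.1 * s i, if p.1 = s i then -p.2 else p.2))
    (by
      have key : ∀ y : W, s i * (s i * y * s i) * s i = y := by
        intro y
        rw [mul_assoc (s i) y, cs.simple_mul_simple_cancel_left,
          cs.simple_mul_simple_cancel_right]
      rintro ⟨x, ε⟩
      by_cases hx : x = s i
      · subst hx
        simp [key]
      · have h2 : ¬(s i * x * s i = s i) := by
          intro h
          have h3 := key x
          rw [h, cs.simple_mul_simple_self, one_mul] at h3
          exact hx h3.symm
        simp [hx, h2, key])

lemma sp_apply (i : B) (x : W) (ε : ℤˣ) :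
    sp cs i (x, ε) = (s i * x * s i, if x = s i then -ε else ε) := rfl

lemma ris_cons (i : B) (ω : List B) :
    ris (i :: ω) = ((π ω)⁻¹ * s i * π ω) :: ris ω := rfl

/-- Key computation: applying the product of sign-flip permutations of a word. -/
lemma prod_sp_apply (ω : List B) (x : W) (ε : ℤˣ) :
    ((ω.map (sp cs)).prod) (x, ε) =
      (π ω * x * (π ω)⁻¹, mu (ris ω) x * ε) := by
  induction ω with
  | nil => simp
  | cons i ω ih =>
    rw [map_cons, prod_cons, Equiv.Perm.mul_apply, ih, sp_apply, ris_cons, mu_cons]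
    have hiff : (π ω * x * (π ω)⁻¹ = s i) ↔ ((π ω)⁻¹ * s i * π ω = x) := by
      constructor
      · intro h; rw [← h]; group
      · intro h; rw [← h]; group
    rw [cs.wordProd_cons]
    simp only [Prod.mk.injEq]
    refine ⟨by rw [mul_inv_rev, cs.inv_simple]; group, ?_⟩
    show (if π ω * x * (π ω)⁻¹ = s i then -(mu (ris ω) x * ε) else mu (ris ω) x * ε)
      = (if (π ω)⁻¹ * s i * π ω = x then (-1 : ℤˣ) else 1) * mu (ris ω) x * ε
    by_cases hc : (π ω)⁻¹ * s i * π ω = x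
    · rw [if_pos (hiff.mpr hc), if_pos hc, neg_mul, one_mul, neg_mul]
    · rw [if_neg (fun h => hc (hiff.mp h)), if_neg hc, one_mul]

/-- The word `[i, j, i, j, ...]` of length `2 * m`. -/
def altw (i j : B) : ℕ → List B
  | 0 => []
  | m + 1 => i :: j :: altw i j m

lemma prod_altw (i j : B) (m : ℕ) :
    π (altw i j m) = (s i * s j) ^ m := by
  induction m with
  | zero => simp [altw]
  | succ m ih =>
    rw [altw, cs.wordProd_cons, cs.wordProd_cons, ih, pow_succ', mul_assoc]

lemma semiconj_pow (i j : B) (n : ℕ) :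
    s j * (s i * s j) ^ n = (s j * s i) ^ n * s j :=
  SemiconjBy.pow_right (by simp [SemiconjBy, mul_assoc]) n

lemma ris_altw (i j : B) (m : ℕ) :
    ris (altw i j m) =
      ((List.range (2 * m)).reverse).map (fun c => (s j * s i) ^ c * s j) := by
  induction m with
  | zero => simp [altw]
  | succ m ih =>
    have hq : (π (altw i j m))⁻¹ = (s j * s i) ^ m := by
      rw [prod_altw, ← inv_pow, mul_inv_rev, cs.inv_simple, cs.inv_simple]
    have h2m : 2 * (m + 1) = (2 * m) + 1 + 1 := by ring
    rw [altw, ris_cons, ris_cons, ih, h2m, List.range_succ, List.range_succ]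
    simp only [List.reverse_append, List.reverse_cons, List.reverse_nil, List.nil_append,
      List.cons_append, List.map_cons, List.singleton_append]
    congr 1
    · -- head : (π (j :: altw i j m))⁻¹ * s i * π (j :: altw i j m) = q ^ (2 m + 1) * s j
      rw [cs.wordProd_cons, mul_inv_rev, cs.inv_simple, hq, prod_altw]
      calc (s j * s i) ^ m * s j * s i * (s j * ((s i * s j) ^ m))
          = (s j * s i) ^ m * (s j * s i) * (s j * (s i * s j) ^ m) := by group
        _ = (s j * s i) ^ m * (s j * s i) * ((s j * s i) ^ m * s j) := by rw [semiconj_pow]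
        _ = (s j * s i) ^ (2 * m + 1) * s j := by
            rw [← mul_assoc, ← pow_succ, ← pow_add, show m + 1 + m = 2 * m + 1 from by ring]
    congr 1
    · -- second : (π (altw i j m))⁻¹ * s j * π (altw i j m) = q ^ (2 m) * s j
      rw [hq, prod_altw]
      calc (s j * s i) ^ m * s j * (s i * s j) ^ m
          = (s j * s i) ^ m * (s j * (s i * s j) ^ m) := by rw [mul_assoc]
        _ = (s j * s i) ^ m * ((s j * s i) ^ m * s j) := by rw [semiconj_pow]
        _ = (s j * s i) ^ (2 * m) * s j := by rw [← mul_assoc, ← pow_add, two_mul]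

lemma mu_ris_altw (i j : B) (x : W) :
    mu (ris (altw i j (M i j))) x = 1 := by
  set m := M i j with hm
  have hq : (s j * s i) ^ m = 1 := cs.simple_mul_simple_pow' i j
  rw [ris_altw]
  have hsplit : List.range (2 * m) = List.range m ++ (List.range m).map (fun c => m + c) := by
    rw [two_mul, List.range_add]
  rw [hsplit, List.reverse_append, List.map_append, mu_append, List.map_reverse,
    List.map_reverse, List.map_map]
  have hfun : ((fun c => (s j * s i) ^ c * s j) ∘ (fun c => m + c)) =
      (fun c => (s j * s i) ^ c * s j) := by
    funext c
    simp only [Function.comp_apply, pow_add, hq, one_mul]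
  rw [hfun, Int.units_mul_self]

lemma liftable : M.IsLiftable (fun i => sp cs i) := by
  intro i j
  have hpow : ∀ m : ℕ, (sp cs i * sp cs j) ^ m = ((altw i j m).map (sp cs)).prod := by
    intro m
    induction m with
    | zero => simp [altw]
    | succ m ih => rw [altw, pow_succ', ih, List.map_cons, List.map_cons, List.prod_cons,
        List.prod_cons, mul_assoc]
  apply Equiv.ext
  rintro ⟨x, ε⟩
  rw [hpow, prod_sp_apply, prod_altw, cs.simple_mul_simple_pow, mu_ris_altw]
  simp

/-- The key invariance: the `mu`-value of the right inversion sequence only depends on the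
element of `W` represented by the word. -/
lemma mu_ris_eq_of_wordProd_eq {ω ω' : List B} (h : π ω = π ω') (x : W) :
    mu (ris ω) x = mu (ris ω') x := by
  have lift_eq : ∀ ρ : List B, ((ρ.map (sp cs)).prod) =
      cs.lift ⟨fun i => sp cs i, liftable cs⟩ (π ρ) := by
    intro ρ
    induction ρ with
    | nil => simp
    | cons i ρ ih =>
      rw [List.map_cons, List.prod_cons, cs.wordProd_cons, map_mul, ih,
        cs.lift_apply_simple]
  have h2 : ((ω.map (sp cs)).prod) (x, 1) = ((ω'.map (sp cs)).prod) (x, 1) := by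
    rw [lift_eq, lift_eq, h]
  rw [prod_sp_apply, prod_sp_apply] at h2
  have := congrArg Prod.snd h2
  simpa using this

/-- The exchange-type lemma. -/
lemma exchange_lemma (u w : B) (z : W)
    (h2 : ¬ ℓ (z * s w) < ℓ z)
    (h3 : ℓ (s u * z * s w) < ℓ (s u * z)) :
    s u * z = z * s w := by
  obtain ⟨ω, hω, hz⟩ := cs.exists_reduced_word z
  obtain ⟨τ, hτ, hx⟩ := cs.exists_reduced_word (s u * z * s w)
  have hπ : π (u :: ω) = π (τ ++ [w]) := by
    rw [cs.wordProd_cons, cs.wordProd_append, cs.wordProd_singleton, ← hx, ← hz,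
      cs.simple_mul_simple_cancel_right]
  have hmu := mu_ris_eq_of_wordProd_eq cs hπ (s w)
  -- compute the right-hand side
  have hτred : cs.IsReduced τ := hτ
  have hnotmem : s w ∉ ris τ := by
    intro hmem
    have hinv := cs.isRightInversion_of_mem_rightInvSeq hτred hmem
    rw [← hx] at hinv
    have := hinv.2
    rw [cs.simple_mul_simple_cancel_right] at this
    omega
  have hconcat : ris (τ ++ [w]) = (List.map (MulAut.conj (s w)) (ris τ)).concat (s w) := by
    rw [← List.concat_eq_append, cs.rightInvSeq_concat]
  have hrhs : mu (ris (τ ++ [w])) (s w) = -1 := by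
    rw [hconcat, List.concat_eq_append, mu_append, mu_singleton, if_pos rfl,
      mu_map_of_iff (fun r => ?_), mu_eq_one_of_not_mem hnotmem, one_mul]
    constructor
    · intro h
      have : (s w) * r * (s w)⁻¹ = s w := h
      rw [cs.inv_simple] at this
      have h4 := congrArg (fun y => s w * y * s w) this
      simpa [mul_assoc, cs.simple_mul_simple_cancel_left,
        cs.simple_mul_simple_cancel_right, cs.simple_mul_simple_self] using h4
    · rintro rfl
      show (s w) * (s w) * (s w)⁻¹ = s w
      simp
  -- left-hand side
  rw [hrhs] at hmu
  have hmem : s w ∈ ris (u :: ω) := by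
    by_contra hnm
    rw [mu_eq_one_of_not_mem hnm] at hmu
    exact absurd hmu (by decide)
  rw [ris_cons] at hmem
  rcases List.mem_cons.mp hmem with hhead | htail
  · -- s w = (π ω)⁻¹ * s u * π ω
    rw [← hz] at hhead
    have := congrArg (fun y => z * y) hhead
    simp only [← mul_assoc, mul_inv_cancel, one_mul] at this
    rw [this]
  · exfalso
    have hωred : cs.IsReduced ω := hω
    have hinv := cs.isRightInversion_of_mem_rightInvSeq hωred htail
    rw [← hz] at hinv
    exact h2 hinv.2

end GammaAux



open GammaAux in
/-- Let `W = ⟨S|M⟩` be a finite rank Coxeter system and `u, w ∈ S`. Then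
`γ_{u,w}^{ψ_S}(z) ≠ 0` if and only if `z ∈ {v, uv, vw, uvw}` for some `v ∈ W` satisfying
`|v| ≤ |uv|`, `|v| ≤ |vw|` and `uv = vw`, where `ψ_S` is the word length. -/
theorem gammaFun_wordLength_ne_zero_iff
    {B : Type*} [Fintype B] {M : CoxeterMatrix B}
    {W : Type*} [Group W] (cs : CoxeterSystem M W)
    (u w : B) (z : W) :
    gammaFun (fun g => (cs.length g : ℝ)) (cs.simple u) (cs.simple w) z ≠ 0 ↔
      ∃ v : W,
        cs.length v ≤ cs.length (cs.simple u * v) ∧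
        cs.length v ≤ cs.length (v * cs.simple w) ∧
        cs.simple u * v = v * cs.simple w ∧
        (z = v ∨ z = cs.simple u * v ∨ z = v * cs.simple w ∨
          z = cs.simple u * v * cs.simple w) := by
  simp only [gammaFun]
  constructor
  · intro h
    rcases cs.length_simple_mul z u with ha | ha <;>
      rcases cs.length_mul_simple z w with hb | hb <;>
      rcases cs.length_mul_simple (cs.simple u * z) w with hc | hc
    · -- (+,+,+) : gamma = 0
      exfalso; apply h
      have key : cs.length (cs.simple u * z * cs.simple w) + cs.length z
          = cs.length (cs.simple u * z) + cs.length (z * cs.simple w) := by omega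
      have key' := congrArg (fun n : ℕ => (n : ℝ)) key
      push_cast at key'
      linarith
    · -- (+,+,-) : exchange applies with v = z
      have heq := exchange_lemma cs u w z (by omega) (by omega)
      exact ⟨z, by omega, by omega, heq, Or.inl rfl⟩
    · -- (+,-,+) : impossible
      exfalso
      have hd := cs.length_simple_mul (z * cs.simple w) u
      rw [← mul_assoc] at hd
      rcases hd with hd | hd <;> omega
    · -- (+,-,-) : gamma = 0
      exfalso; apply h
      have key : cs.length (cs.simple u * z * cs.simple w) + cs.length z
          = cs.length (cs.simple u * z) + cs.length (z * cs.simple w) := by omega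
      have key' := congrArg (fun n : ℕ => (n : ℝ)) key
      push_cast at key'
      linarith
    · -- (-,+,+) : gamma = 0
      exfalso; apply h
      have key : cs.length (cs.simple u * z * cs.simple w) + cs.length z
          = cs.length (cs.simple u * z) + cs.length (z * cs.simple w) := by omega
      have key' := congrArg (fun n : ℕ => (n : ℝ)) key
      push_cast at key'
      linarith
    · -- (-,+,-) : impossible
      exfalso
      have hd := cs.length_simple_mul (z * cs.simple w) u
      rw [← mul_assoc] at hd
      rcases hd with hd | hd <;> omega
    · -- (-,-,+) : exchange applies with v = s u * z
      have heq := exchange_lemma cs u w (cs.simple u * z)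
        (by omega)
        (by rw [cs.simple_mul_simple_cancel_left]; omega)
      refine ⟨cs.simple u * z, ?_, ?_, heq, Or.inr (Or.inl
        (cs.simple_mul_simple_cancel_left u).symm)⟩
      · rw [cs.simple_mul_simple_cancel_left]; omega
      · omega
    · -- (-,-,-) : gamma = 0
      exfalso; apply h
      have key : cs.length (cs.simple u * z * cs.simple w) + cs.length z
          = cs.length (cs.simple u * z) + cs.length (z * cs.simple w) := by omega
      have key' := congrArg (fun n : ℕ => (n : ℝ)) key
      push_cast at key'
      linarith
  · rintro ⟨v, h1, h2, h3, hz⟩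
    have hsv : cs.length (cs.simple u * v) = cs.length v + 1 := by
      rcases cs.length_simple_mul v u with h | h
      · exact h
      · omega
    have hvw : cs.length (v * cs.simple w) = cs.length v + 1 := by rw [← h3]; exact hsv
    have hsvw : cs.simple u * v * cs.simple w = v := by
      rw [h3, cs.simple_mul_simple_cancel_right]
    rcases hz with rfl | rfl | rfl | rfl
    · rw [hsvw, hsv, hvw]; push_cast; intro hcon; linarith
    · rw [cs.simple_mul_simple_cancel_left, hsvw, hsv, hvw]; push_cast; intro hcon; linarith
    · rw [← h3, cs.simple_mul_simple_cancel_left, hsvw, hsv, hvw]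
      push_cast; intro hcon; linarith
    · rw [hsvw, hsvw, hsv, hvw]; push_cast; intro hcon; linarith
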